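/- Let X be a real Hilbert space, f, g ∈ Γ₀(X), and v ∈ X such that ⟨v, v − (a − b)⟩ ≤ 0 for all a ∈ dom f and b ∈ dom g (i.e., v is the point of minimal norm in the closure of dom f − dom g). Let x ∈ X and y ∈ dom f with y − v ∈ dom g. Then ⟨y − P_f x, v⟩ ≤ 0 and f(y) ≥ f(P_f x) + ⟨y − P_f x, v + P_{f*} x⟩, where P_{f*} x = x − P_f x. -/

import Mathlib

open scoped RealInnerProductSpace

/-- the prox lemma, Lemma 6.3 (i)–(ii): if `v` satisfies
`⟨v, v − (a − b)⟩ ≤ 0` for all `a ∈ dom f`, `b ∈ dom g`, and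
`y ∈ dom f ∩ (v + dom g)`, then for any `x` and `p = P_f x` one has
`⟨y − p, v⟩ ≤ 0` and `f(y) ≥ f(p) + ⟨y − p, v + (x − p)⟩`
(note `P_{f*} x = x − P_f x`). -/
theorem prox_lemma
    {X : Type*} [NormedAddCommGroup X] [InnerProductSpace ℝ X] [CompleteSpace X]
    (f g : X → EReal)
    (hf_proper : ∃ z, f z ≠ ⊤) (hf_ne_bot : ∀ z, f z ≠ ⊥)
    (hf_lsc : LowerSemicontinuous f)
    (hf_conv : ∀ x y : X, ∀ t : ℝ, 0 ≤ t → t ≤ 1 →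
      f (t • x + (1 - t) • y) ≤ (t : EReal) * f x + ((1 - t : ℝ) : EReal) * f y)
    (hg_proper : ∃ z, g z ≠ ⊤) (hg_ne_bot : ∀ z, g z ≠ ⊥)
    (hg_lsc : LowerSemicontinuous g)
    (hg_conv : ∀ x y : X, ∀ t : ℝ, 0 ≤ t → t ≤ 1 →
      g (t • x + (1 - t) • y) ≤ (t : EReal) * g x + ((1 - t : ℝ) : EReal) * g y)
    (v : X)
    (hv : ∀ a b_ : X, f a ≠ ⊤ → g b_ ≠ ⊤ → ⟪v, v - (a - b_)⟫ ≤ (0 : ℝ))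
    (x y : X) (hyf : f y ≠ ⊤) (hyg : g (y - v) ≠ ⊤)
    (p : X)
    (hp : ∀ z, f p + (((1 / 2) * ‖p - x‖ ^ 2 : ℝ) : EReal) ≤
               f z + (((1 / 2) * ‖z - x‖ ^ 2 : ℝ) : EReal)) :
    ⟪y - p, v⟫ ≤ (0 : ℝ) ∧
    f p + ((⟪y - p, v + (x - p)⟫ : ℝ) : EReal) ≤ f y := by
  have hB : f y = ((f y).toReal : EReal) := (EReal.coe_toReal hyf (hf_ne_bot y)).symm
  set B := (f y).toReal with hBdef
  have hfp_ne_top : f p ≠ ⊤ := by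
    intro h
    have h1 := hp y
    rw [h, hB] at h1
    rw [EReal.top_add_of_ne_bot (by exact_mod_cast EReal.coe_ne_bot _)] at h1
    rw [← EReal.coe_add] at h1
    exact EReal.coe_ne_top _ (top_le_iff.mp h1)
  have hA : f p = ((f p).toReal : EReal) := (EReal.coe_toReal hfp_ne_top (hf_ne_bot p)).symm
  set A := (f p).toReal with hAdef
  -- Part (i)
  have hiv : ⟪v, y - p⟫ ≤ (0:ℝ) := by
    have h := hv p (y - v) hfp_ne_top hyg
    have e : v - (p - (y - v)) = y - p := by abel
    rwa [e] at h
  have hi : ⟪y - p, v⟫ ≤ (0:ℝ) := by rwa [real_inner_comm]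
  -- Part (ii): key real inequality
  have key : A + ⟪y - p, x - p⟫ ≤ B := by
    have main : ∀ t : ℝ, 0 < t → t ≤ 1 →
        A - B - ⟪p - x, y - p⟫ ≤ t * ((1/2) * ‖y - p‖^2) := by
      intro t ht ht1
      have hconv := hf_conv y p t ht.le ht1
      rw [hB, hA, ← EReal.coe_mul, ← EReal.coe_mul, ← EReal.coe_add] at hconv
      have hpz := hp (t • y + (1 - t) • p)
      have h2 := le_trans hpz (add_le_add_left hconv _)
      rw [hA, ← EReal.coe_add, ← EReal.coe_add, EReal.coe_le_coe_iff] at h2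
      have hz : t • y + (1-t) • p - x = (p - x) + t • (y - p) := by
        simp [smul_sub, sub_smul, one_smul]; abel
      rw [hz, norm_add_sq_real, real_inner_smul_right, norm_smul,
        Real.norm_eq_abs, abs_of_pos ht, mul_pow] at h2
      nlinarith [h2, ht]
    have hM : (0:ℝ) ≤ (1/2) * ‖y - p‖^2 := by positivity
    set M := (1/2) * ‖y - p‖^2 with hMdef
    have hle : ∀ ε : ℝ, 0 < ε → A - B - ⟪p - x, y - p⟫ ≤ ε := by
      intro ε hε
      have htpos : 0 < min 1 (ε/(M+1)) := lt_min one_pos (div_pos hε (by linarith))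
      have h5 := main _ htpos (min_le_left _ _)
      have h4 : min 1 (ε/(M+1)) * M ≤ ε := by
        calc min 1 (ε/(M+1)) * M ≤ (ε/(M+1)) * M :=
              mul_le_mul_of_nonneg_right (min_le_right _ _) hM
          _ ≤ ε := by
              rw [div_mul_eq_mul_div, div_le_iff₀ (by linarith)]
              nlinarith
      linarith
    have h5 : A - B - ⟪p - x, y - p⟫ ≤ 0 := by
      by_contra hc
      push_neg at hc
      have := hle _ (half_pos hc)
      linarith
    have hinner : ⟪p - x, y - p⟫ = -⟪y - p, x - p⟫ := by
      rw [real_inner_comm, ← inner_neg_right, neg_sub]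
    linarith [h5, hinner.symm ▸ h5]
  refine ⟨hi, ?_⟩
  rw [hA, hB, ← EReal.coe_add, EReal.coe_le_coe_iff]
  rw [inner_add_right]
  linarith
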